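/- For d ≥ 2, the unique maximizer z* of the function z ↦ (1/2)·(z + M_d^q(z)) on [1/d, 1] satisfies z* = (1/2)·(1 + 1/√d), and at this point M_d^q(z*) = z*, so the maximum value is (1/2)·(1 + 1/√d). -/

import Mathlib

open Real

theorem optimal_asp_maximizer (d : ℕ) (hd : 2 ≤ d) :
    let M : ℝ → ℝ := fun z =>
      1 - (((d : ℝ) - 1) / d) * (Real.sqrt z - Real.sqrt ((1 - z) / ((d : ℝ) - 1))) ^ 2
    let g : ℝ → ℝ := fun z => (1 / 2) * (z + M z)
    let zstar : ℝ := (1 / 2) * (1 + 1 / Real.sqrt d)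
    zstar ∈ Set.Icc (1 / (d : ℝ)) 1 ∧
    (∀ z ∈ Set.Icc (1 / (d : ℝ)) 1, g z ≤ g zstar) ∧
    (∀ z ∈ Set.Icc (1 / (d : ℝ)) 1, g z = g zstar → z = zstar) ∧
    M zstar = zstar ∧
    g zstar = (1 / 2) * (1 + 1 / Real.sqrt d) := by
  intro M g zstar
  have hd2 : (2:ℝ) ≤ (d:ℝ) := by exact_mod_cast hd
  have hd0 : (0:ℝ) < (d:ℝ) := by linarith
  set s : ℝ := Real.sqrt (d:ℝ) with hs
  have hs2 : s ^ 2 = (d:ℝ) := Real.sq_sqrt (le_of_lt hd0)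
  have hs0 : 0 < s := Real.sqrt_pos.mpr hd0
  have hs1 : 1 < s := by nlinarith [hs2, hs0]
  have hsne : s ≠ 0 := ne_of_gt hs0
  have hsp : s + 1 ≠ 0 := by positivity
  have hsm : s - 1 ≠ 0 := by intro h; have := sub_eq_zero.mp h; linarith
  have hsq1 : s ^ 2 - 1 ≠ 0 := by nlinarith
  have hzstar : zstar = (1/2) * (1 + 1/s) := rfl
  have hz0' : 0 ≤ zstar := by rw [hzstar]; positivity
  set A : ℝ := Real.sqrt zstar with hAdef
  have hA2 : A ^ 2 = zstar := Real.sq_sqrt hz0'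
  have hA2' : A ^ 2 = (1/2) * (1 + 1/s) := by rw [hA2, hzstar]
  have hA2'' : 2 * s * A ^ 2 = s + 1 := by rw [hA2']; field_simp
  have hBeq : Real.sqrt ((1 - zstar) / ((d:ℝ) - 1)) = A / (s + 1) := by
    have h : (1 - zstar) / ((d:ℝ) - 1) = (A / (s + 1)) ^ 2 := by
      rw [← hs2, div_pow, hA2, hzstar]
      field_simp
      ring
    rw [h, Real.sqrt_sq (by positivity)]
  have hMz : M zstar = zstar := by
    show 1 - (((d:ℝ) - 1) / d) * (Real.sqrt zstar - Real.sqrt ((1 - zstar) / ((d:ℝ) - 1))) ^ 2 = zstar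
    rw [hBeq, ← hAdef, ← hs2, hzstar]
    field_simp
    linear_combination (s - s^3) * hA2''
  have hgstar : g zstar = zstar := by
    show (1/2) * (zstar + M zstar) = zstar
    rw [hMz]; ring
  have hgstar' : g zstar = (1/2) * (1 + 1/s) := by rw [hgstar, hzstar]
  have hmem : zstar ∈ Set.Icc (1 / (d:ℝ)) 1 := by
    constructor
    · have hsd : s ≤ (d:ℝ) := by nlinarith
      have h1 : 1/(d:ℝ) ≤ 1/s := one_div_le_one_div_of_le hs0 hsd
      have h2 : 1/s ≤ 1 := by rw [div_le_one hs0]; linarith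
      rw [hzstar]; linarith
    · have h2 : 1/s ≤ 1 := by rw [div_le_one hs0]; linarith
      rw [hzstar]; linarith
  have main : ∀ z ∈ Set.Icc (1 / (d:ℝ)) 1,
      g z ≤ g zstar ∧ (g z = g zstar → z = zstar) := by
    rintro z ⟨hzl, hzu⟩
    have hz0 : 0 ≤ z := le_trans (by positivity) hzl
    have hz1 : 1 - z ≥ 0 := by linarith
    set a : ℝ := Real.sqrt z with hadef
    set b : ℝ := Real.sqrt ((1 - z) / ((d:ℝ) - 1)) with hbdef
    have ha : a ^ 2 = z := Real.sq_sqrt hz0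
    have hb : b ^ 2 = (1 - z) / (s ^ 2 - 1) := by
      rw [hbdef, ← hs2]
      exact Real.sq_sqrt (div_nonneg hz1 (by nlinarith))
    have h1z : 1 - z = (s ^ 2 - 1) * b ^ 2 := by
      rw [hb]; field_simp
    have hgz : g z = (1/2) * (z + (1 - (((d:ℝ) - 1) / d) * (a - b) ^ 2)) := rfl
    have key : 2 * s ^ 2 * g zstar - 2 * s ^ 2 * g z
        = (s - 1) * (a - (s + 1) * b) ^ 2 := by
      rw [hgz, hgstar', ← hs2, ← ha]
      have hcon : a ^ 2 + (s ^ 2 - 1) * b ^ 2 = 1 := by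
        rw [ha]; linarith
      field_simp
      linear_combination (-s) * hcon
    have h1 : 0 ≤ (s - 1) * (a - (s + 1) * b) ^ 2 :=
      mul_nonneg (by linarith) (sq_nonneg _)
    constructor
    · have h2 : 2 * s ^ 2 * g z ≤ 2 * s ^ 2 * g zstar := by linarith
      exact (mul_le_mul_iff_right₀ (by positivity : (0:ℝ) < 2 * s ^ 2)).mp h2
    · intro heq
      rw [heq] at key
      have hsq0 : (a - (s + 1) * b) ^ 2 = 0 := by
        have h0 : (s - 1) * (a - (s + 1) * b) ^ 2 = 0 := by linarith
        rcases mul_eq_zero.mp h0 with h | h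
        · exact absurd h hsm
        · exact h
      have hab : a = (s + 1) * b := by
        have := pow_eq_zero_iff (n := 2) (by norm_num) |>.mp hsq0
        linarith [sub_eq_zero.mp this]
      have h1 : z = (s + 1) ^ 2 * b ^ 2 := by rw [← ha, hab]; ring
      have h4 : 2 * s * z = s + 1 := by
        linear_combination (s - 1) * h1 - (s + 1) * h1z
      rw [hzstar]
      field_simp
      linear_combination h4
  exact ⟨hmem, fun z hz => (main z hz).1, fun z hz => (main z hz).2, hMz, hgstar'⟩
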